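/- In the descending phase of the Blum–Koch algorithm (processing k = |N| down to 1), if every non-terminal N_j with j > k already has all its rules in Greibach Normal Form, then after expanding every rule N_k → N_j.X (j > k) by substituting the rules of N_j, all rules of N_k are in Greibach Normal Form; hence by downward induction the final grammar is in Greibach Normal Form. -/
import Mathlib


namespace WCFG

/-- A context-free grammar: a set of production rules `(A, rhs)` and a start symbol. -/
structure CFG (T N : Type) where
  rules : Set (N × List (T ⊕ N))
  start : N

/-- Parse trees: leaves are terminal letters, internal nodes are labeled by a non-terminal. -/
inductive PT (T N : Type) : Type where
  | leaf (t : T) : PT T N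
  | node (A : N) (children : List (PT T N)) : PT T N

/-- The symbol (terminal or non-terminal) at the root of a parse tree. -/
def PT.sym {T N : Type} : PT T N → T ⊕ N
  | .leaf t => .inl t
  | .node A _ => .inr A

mutual
/-- The yield (produced word) of a parse tree. -/
def PT.yield {T N : Type} : PT T N → List T
  | .leaf t => [t]
  | .node _ cs => PT.yieldF cs
def PT.yieldF {T N : Type} : List (PT T N) → List T
  | [] => []
  | p :: ps => PT.yield p ++ PT.yieldF ps
end

mutual
/-- The weight of a parse tree: product of the weights of the rules used (with multiplicity). -/
def PT.weight {T N : Type} (wt : N × List (T ⊕ N) → ℝ) : PT T N → ℝ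
  | .leaf _ => 1
  | .node A cs => wt (A, cs.map PT.sym) * PT.weightF wt cs
def PT.weightF {T N : Type} (wt : N × List (T ⊕ N) → ℝ) : List (PT T N) → ℝ
  | [] => 1
  | p :: ps => PT.weight wt p * PT.weightF wt ps
end

mutual
/-- Number of occurrences of a rule in a parse tree. -/
def PT.ruleCount {T N : Type} [DecidableEq N] [DecidableEq T]
    (r : N × List (T ⊕ N)) : PT T N → ℕ
  | .leaf _ => 0
  | .node A cs => (if (A, cs.map PT.sym) = r then 1 else 0) + PT.ruleCountF r cs
def PT.ruleCountF {T N : Type} [DecidableEq N] [DecidableEq T]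
    (r : N × List (T ⊕ N)) : List (PT T N) → ℕ
  | [] => 0
  | p :: ps => PT.ruleCount r p + PT.ruleCountF r ps
end

/-- Well-formedness of a parse tree w.r.t. a grammar. -/
inductive PT.wf {T N : Type} (G : CFG T N) : PT T N → Prop
  | leaf (t : T) : (PT.leaf t).wf G
  | node (A : N) (cs : List (PT T N)) (hr : (A, cs.map PT.sym) ∈ G.rules)
      (hc : ∀ c ∈ cs, c.wf G) : (PT.node A cs).wf G

/-- The language generated by a grammar. -/
def CFG.lang {T N : Type} (G : CFG T N) : Set (List T) :=
  {w | ∃ p : PT T N, p.wf G ∧ p.sym = Sum.inr G.start ∧ p.yield = w}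

/-- Unambiguity: any word has at most one parse tree from the axiom. -/
def CFG.Unambiguous {T N : Type} (G : CFG T N) : Prop :=
  ∀ p q : PT T N, p.wf G → q.wf G → p.sym = Sum.inr G.start → q.sym = Sum.inr G.start →
    p.yield = q.yield → p = q

/-- `wDeriv G wt X w c` : the word `w` derives from the sentential form `X`
with total weight `c` (product over all rules used, with multiplicity). -/
def wDeriv {T N : Type} (G : CFG T N) (wt : N × List (T ⊕ N) → ℝ)
    (X : List (T ⊕ N)) (w : List T) (c : ℝ) : Prop :=
  ∃ ps : List (PT T N), (∀ p ∈ ps, p.wf G) ∧ ps.map PT.sym = X ∧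
    PT.yieldF ps = w ∧ (ps.map (PT.weight wt)).prod = c


/-- Descending-phase processing of `N_k`: every rule `N_k → N_j.X` with `k < j` is
expanded by substituting all the rules of `N_j`; the other rules are kept. -/
def ExpandAll {T : Type} (k : ℕ) (G G' : CFG T ℕ) : Prop :=
  G'.start = G.start ∧
  G'.rules = {r ∈ G.rules | r.1 ≠ k ∨ ∀ (B : ℕ) (X : List (T ⊕ ℕ)), r.2 ≠ Sum.inr B :: X} ∪
    {r' | ∃ (j : ℕ) (X Xi : List (T ⊕ ℕ)), k < j ∧ (k, Sum.inr j :: X) ∈ G.rules ∧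
      (j, Xi) ∈ G.rules ∧ r' = (k, Xi ++ X)}

/-- In the descending phase of the Blum–Koch algorithm: (a) if every
non-terminal `N_j` with `j > k` already has all its rules in GNF (right-hand sides
starting with a terminal), and every rule of `N_k` starts with a terminal or with some
`N_j`, `j > k`, then after expanding every rule `N_k → N_j.X` all rules of `N_k` are in
GNF; (b) hence, by downward induction, after processing `k = n-1` down to `0` starting
from a grammar whose rules all start with a terminal or with a strictly larger
non-terminal, the final grammar is in GNF. -/
theorem blum_koch_descending_gnf {T : Type} (n : ℕ) (Gs : ℕ → CFG T ℕ)
    (hlhs : ∀ r ∈ (Gs 0).rules, r.1 < n)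
    (hasc : ∀ (j : ℕ) (rhs : List (T ⊕ ℕ)), (j, rhs) ∈ (Gs 0).rules →
      (∃ (t : T) (X : List (T ⊕ ℕ)), rhs = Sum.inl t :: X) ∨
      ∃ (l : ℕ) (X : List (T ⊕ ℕ)), j < l ∧ rhs = Sum.inr l :: X)
    (hstep : ∀ i < n, ExpandAll (n - 1 - i) (Gs i) (Gs (i + 1))) :
    (∀ (k : ℕ) (G G' : CFG T ℕ),
      (∀ j, k < j → ∀ rhs : List (T ⊕ ℕ), (j, rhs) ∈ G.rules →
        ∃ (t : T) (X : List (T ⊕ ℕ)), rhs = Sum.inl t :: X) →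
      (∀ rhs : List (T ⊕ ℕ), (k, rhs) ∈ G.rules →
        (∃ (t : T) (X : List (T ⊕ ℕ)), rhs = Sum.inl t :: X) ∨
        ∃ (j : ℕ) (X : List (T ⊕ ℕ)), k < j ∧ rhs = Sum.inr j :: X) →
      ExpandAll k G G' →
      ∀ rhs : List (T ⊕ ℕ), (k, rhs) ∈ G'.rules →
        ∃ (t : T) (X : List (T ⊕ ℕ)), rhs = Sum.inl t :: X) ∧
    (∀ r ∈ (Gs n).rules, ∃ (t : T) (X : List (T ⊕ ℕ)), r.2 = Sum.inl t :: X) := by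
  have partA : ∀ (k : ℕ) (G G' : CFG T ℕ),
      (∀ j, k < j → ∀ rhs : List (T ⊕ ℕ), (j, rhs) ∈ G.rules →
        ∃ (t : T) (X : List (T ⊕ ℕ)), rhs = Sum.inl t :: X) →
      (∀ rhs : List (T ⊕ ℕ), (k, rhs) ∈ G.rules →
        (∃ (t : T) (X : List (T ⊕ ℕ)), rhs = Sum.inl t :: X) ∨
        ∃ (j : ℕ) (X : List (T ⊕ ℕ)), k < j ∧ rhs = Sum.inr j :: X) →
      ExpandAll k G G' →
      ∀ rhs : List (T ⊕ ℕ), (k, rhs) ∈ G'.rules →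
        ∃ (t : T) (X : List (T ⊕ ℕ)), rhs = Sum.inl t :: X := by
    intro k G G' hj hk hE rhs hrhs
    rcases hE with ⟨_, hR⟩
    rw [hR] at hrhs
    rcases hrhs with ⟨hmem, hcond⟩ | ⟨j, X, Xi, hkj, _, hXi, heq⟩
    · rcases hcond with h | h
      · exact absurd rfl h
      · rcases hk rhs hmem with h1 | ⟨j, X, hjk, hX⟩
        · exact h1
        · exact absurd hX (h j X)
    · obtain ⟨t, Y, hY⟩ := hj j hkj Xi hXi
      have h2 : rhs = Xi ++ X := congrArg Prod.snd heq
      exact ⟨t, Y ++ X, by simp [h2, hY]⟩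
  refine ⟨partA, ?_⟩
  have inv : ∀ i ≤ n, ∀ (j : ℕ) (rhs : List (T ⊕ ℕ)), (j, rhs) ∈ (Gs i).rules →
      j < n ∧ ((∃ (t : T) (X : List (T ⊕ ℕ)), rhs = Sum.inl t :: X) ∨
        ∃ (l : ℕ) (X : List (T ⊕ ℕ)), j < l ∧ rhs = Sum.inr l :: X) ∧
      (n - i ≤ j → ∃ (t : T) (X : List (T ⊕ ℕ)), rhs = Sum.inl t :: X) := by
    intro i
    induction i with
    | zero =>
      intro _ j rhs hmem
      refine ⟨hlhs _ hmem, hasc j rhs hmem, fun h => ?_⟩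
      exact absurd (hlhs _ hmem) (by omega)
    | succ i ih =>
      intro hle j rhs hmem
      have hin : i < n := by omega
      obtain ⟨_, hR⟩ := hstep i hin
      set k := n - 1 - i with hk
      rw [hR] at hmem
      rcases hmem with ⟨hmem, hcond⟩ | ⟨l, X, Xi, hkl, _, hXi, heq⟩
      · obtain ⟨hjn, hdisj, hgnf⟩ := ih (by omega) j rhs hmem
        refine ⟨hjn, hdisj, fun hle2 => ?_⟩
        by_cases hjk : j = k
        · rcases hcond with h | h
          · exact absurd hjk h
          · rcases hdisj with h1 | ⟨l, X, _, hX⟩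
            · exact h1
            · exact absurd hX (h l X)
        · exact hgnf (by omega)
      · obtain ⟨hln, hdisj, hgnf⟩ := ih (by omega) l Xi hXi
        have hj : j = k := congrArg Prod.fst heq
        have hrhs : rhs = Xi ++ X := congrArg Prod.snd heq
        obtain ⟨t, Y, hY⟩ := hgnf (by omega)
        exact ⟨by omega, Or.inl ⟨t, Y ++ X, by simp [hrhs, hY]⟩,
          fun _ => ⟨t, Y ++ X, by simp [hrhs, hY]⟩⟩
  intro r hmem
  obtain ⟨_, _, hgnf⟩ := inv n le_rfl r.1 r.2 hmem
  exact hgnf (by omega)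

end WCFG
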